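/- For every k ≥ 1, every cycle has a consistent (k+1 : k)-colouring with clustering at most k² + 3k − 1. -/

import Mathlib

open SimpleGraph

/-- The strong product of two simple graphs. -/
def strongProd {α β : Type*} (G : SimpleGraph α) (H : SimpleGraph β) :
    SimpleGraph (α × β) where
  Adj x y := x ≠ y ∧ (x.1 = y.1 ∨ G.Adj x.1 y.1) ∧ (x.2 = y.2 ∨ H.Adj x.2 y.2)
  symm := ⟨fun x y => by
    rintro ⟨h1, h2, h3⟩
    exact ⟨h1.symm, h2.imp Eq.symm (fun h => G.symm.symm _ _ h), h3.imp Eq.symm (fun h => H.symm.symm _ _ h)⟩⟩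
  loopless := ⟨fun x => by simp⟩

/-- The strong product of a family of simple graphs. -/
def strongProdPi {d : ℕ} {V : Fin d → Type*} (G : ∀ i, SimpleGraph (V i)) :
    SimpleGraph (∀ i, V i) where
  Adj x y := x ≠ y ∧ ∀ i, x i = y i ∨ (G i).Adj (x i) (y i)
  symm := ⟨fun x y ⟨h1, h2⟩ => ⟨h1.symm, fun i => (h2 i).imp Eq.symm (fun h => (G i).symm.symm _ _ h)⟩⟩
  loopless := ⟨fun x => by simp⟩

/-- Every connected component of the subgraph of `G` induced on `S` has at most `c`
vertices. -/
def ClusterBound {α : Type*} (G : SimpleGraph α) (S : Set α) (c : ℕ) : Prop :=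
  ∀ v : S, ((G.induce S).connectedComponentMk v).supp.ncard ≤ c

/-- `G` has a `k`-colouring with clustering `c`. -/
def HasClusteredColoring {α : Type*} (G : SimpleGraph α) (k c : ℕ) : Prop :=
  ∃ f : α → Fin k, ∀ i : Fin k, ClusterBound G {v | f v = i} c

/-- `f` is a `(p:q)`-colouring: each vertex gets a `q`-element subset of `Fin p`. -/
def IsPQColoring {α : Type*} (p q : ℕ) (f : α → Finset (Fin p)) : Prop :=
  ∀ v, (f v).card = q

/-- `f` is a proper `(p:q)`-colouring of `G`. -/
def IsProperPQColoring {α : Type*} (G : SimpleGraph α) (p q : ℕ)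
    (f : α → Finset (Fin p)) : Prop :=
  IsPQColoring p q f ∧ ∀ ⦃x y⦄, G.Adj x y → Disjoint (f x) (f y)

/-- The set-colouring `f` has clustering `c`: for each colour, each monochromatic
component has at most `c` vertices. -/
def PQClusterBound {α : Type*} (G : SimpleGraph α) {p : ℕ}
    (f : α → Finset (Fin p)) (c : ℕ) : Prop :=
  ∀ i : Fin p, ClusterBound G {v | i ∈ f v} c

/-- `G` has a `(p:q)`-colouring with clustering `c`. -/
def HasPQClusteredColoring {α : Type*} (G : SimpleGraph α) (p q c : ℕ) : Prop :=
  ∃ f : α → Finset (Fin p), IsPQColoring p q f ∧ PQClusterBound G f c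

/-- `ord` is a consistent `(p:q)`-colouring of `G` (each vertex's `q` colours are ordered,
with the `i`-th colour of `x` different from the `j`-th colour of `y` for every edge `xy`
and all distinct `i, j`). -/
def IsConsistentPQColoring {α : Type*} (G : SimpleGraph α) (p q : ℕ)
    (ord : α → Fin q → Fin p) : Prop :=
  (∀ v, Function.Injective (ord v)) ∧
    ∀ ⦃x y⦄, G.Adj x y → ∀ i j : Fin q, i ≠ j → ord x i ≠ ord y j

/-- The colour set of a vertex in an ordered colouring. -/
def ordColors {α : Type*} {p q : ℕ} (ord : α → Fin q → Fin p) (v : α) : Finset (Fin p) :=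
  Finset.image (ord v) Finset.univ

/-- `G` has a consistent `(p:q)`-colouring with clustering `c`. -/
def HasConsistentClusteredColoring {α : Type*} (G : SimpleGraph α) (p q c : ℕ) : Prop :=
  ∃ ord : α → Fin q → Fin p, IsConsistentPQColoring G p q ord ∧
    PQClusterBound G (ordColors ord) c

/-- The fractional chromatic number of `G`: the infimum of `p/q` over proper
`(p:q)`-colourings of `G`. -/
noncomputable def fracChrom {α : Type*} (G : SimpleGraph α) : ℝ :=
  sInf {t : ℝ | ∃ p q : ℕ, 0 < q ∧
    (∃ f : α → Finset (Fin p), IsProperPQColoring G p q f) ∧ t = (p : ℝ) / q}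

/-- The independence number of `G`. -/
noncomputable def indepNum {α : Type*} (G : SimpleGraph α) : ℕ :=
  sSup {n | ∃ s : Finset α, (∀ x ∈ s, ∀ y ∈ s, ¬ G.Adj x y) ∧ s.card = n}

-- AUX START

/-- block index of vertex v -/
def cbeta (n B v : ℕ) : ℕ := v * B / n
/-- first vertex of block t -/
def cstart (n B t : ℕ) : ℕ := (t * n + (B - 1)) / B
def czig (K j : ℕ) : ℕ := min j (K - j)
def cm (n B K v : ℕ) : ℕ := czig K (cbeta n B v % K)

lemma cstart_le_iff {n B : ℕ} (hn : 0 < n) (hB : 0 < B) (t v : ℕ) :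
    cstart n B t ≤ v ↔ t ≤ cbeta n B v := by
  unfold cstart cbeta
  rw [Nat.div_le_iff_le_mul_add_pred hB, Nat.le_div_iff_mul_le hn, mul_comm B v]
  omega

lemma cbeta_mono {n B : ℕ} {v w : ℕ} (h : v ≤ w) : cbeta n B v ≤ cbeta n B w :=
  Nat.div_le_div_right (Nat.mul_le_mul_right _ h)

lemma cstart_mono {n B : ℕ} {t u : ℕ} (h : t ≤ u) : cstart n B t ≤ cstart n B u :=
  Nat.div_le_div_right (by have := Nat.mul_le_mul_right n h; omega)

lemma cbeta_succ_le {n B : ℕ} (hn : 0 < n) (hBn : B ≤ n) (v : ℕ) :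
    cbeta n B (v + 1) ≤ cbeta n B v + 1 := by
  unfold cbeta
  have h1 : (v + 1) * B ≤ v * B + n := by
    have : (v+1)*B = v*B + B := by ring
    omega
  calc (v + 1) * B / n ≤ (v * B + n) / n := Nat.div_le_div_right h1
    _ = v * B / n + 1 := Nat.add_div_right _ hn

lemma cstart_add {n B : ℕ} (hB : 0 < B) (t : ℕ) :
    cstart n B (t + B) = cstart n B t + n := by
  unfold cstart
  rw [show (t + B) * n + (B - 1) = (t * n + (B-1)) + B * n by ring]
  rw [Nat.add_mul_div_left _ _ hB]

lemma cstart_succ {n B : ℕ} (hB : 0 < B) (hBn : B ≤ n) (t : ℕ) :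
    cstart n B t + 1 ≤ cstart n B (t + 1) := by
  unfold cstart
  have h1 : (t * n + (B-1)) + B ≤ (t+1) * n + (B - 1) := by
    have : (t+1)*n = t*n + n := by ring
    omega
  calc cstart n B t + 1 = (t * n + (B-1) + B) / B := (Nat.add_div_right _ hB).symm
    _ ≤ _ := Nat.div_le_div_right h1

lemma cstart_bound {n B : ℕ} (hB : 0 < B) (h3 : n ≤ 3 * B) (t g : ℕ) :
    cstart n B (t + g) ≤ cstart n B t + 3 * g := by
  have h1 : t * n ≤ B * cstart n B t := by
    have := Nat.div_add_mod (t * n + (B - 1)) B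
    have := Nat.mod_lt (t * n + (B - 1)) hB
    unfold cstart
    omega
  have h2 : g * n ≤ 3 * g * B := by
    calc g * n ≤ g * (3 * B) := Nat.mul_le_mul_left g h3
      _ = 3 * g * B := by ring
  rw [cstart, Nat.div_le_iff_le_mul_add_pred hB]
  have h4 : (t + g) * n = t * n + g * n := by ring
  have h5 : B * (cstart n B t + 3 * g) = B * cstart n B t + 3 * g * B := by ring
  omega

lemma cbeta_lt {n B : ℕ} (hn : 0 < n) (hB : 0 < B) {v : ℕ} (hv : v < n) :
    cbeta n B v < B := by
  rw [cbeta, Nat.div_lt_iff_lt_mul hn]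
  calc v * B < n * B := (Nat.mul_lt_mul_right hB).mpr hv
    _ = B * n := mul_comm _ _

lemma cstart_B {n B : ℕ} (hB : 0 < B) : cstart n B B = n := by
  rw [cstart, mul_comm B n, mul_comm]
  rw [Nat.mul_add_div hB]
  simp [Nat.div_eq_of_lt (by omega : B - 1 < B)]

lemma cbeta_last {n B : ℕ} (hn : 0 < n) (hB : 0 < B) (hBn : B ≤ n) :
    cbeta n B (n - 1) = B - 1 := by
  have h1 : cbeta n B (n-1) < B := cbeta_lt hn hB (by omega)
  have h2 : B - 1 ≤ cbeta n B (n - 1) := by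
    rw [← cstart_le_iff hn hB]
    have h3 := cstart_succ hB hBn (B-1)
    rw [show B - 1 + 1 = B by omega, cstart_B hB] at h3
    omega
  omega

lemma cbeta_cstart {n B : ℕ} (hn : 0 < n) (hB : 0 < B) (hBn : B ≤ n) (t : ℕ) :
    cbeta n B (cstart n B t) = t := by
  have h1 : t ≤ cbeta n B (cstart n B t) := (cstart_le_iff hn hB t _).mp le_rfl
  have h2 : ¬ (t + 1 ≤ cbeta n B (cstart n B t)) := by
    rw [← cstart_le_iff hn hB]
    have := cstart_succ hB hBn t
    omega
  omega

lemma cstart_lt_n {n B : ℕ} (hn : 0 < n) (hB : 0 < B) (hBn : B ≤ n) {t : ℕ} (ht : t < B) :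
    cstart n B t < n := by
  have h1 : cstart n B t + 1 ≤ cstart n B (t+1) := cstart_succ hB hBn t
  have h2 : cstart n B (t+1) ≤ cstart n B B := cstart_mono (by omega)
  rw [cstart_B hB] at h2
  omega

lemma cstart_mod {n B : ℕ} (hn : 0 < n) (hB : 0 < B) (hBn : B ≤ n) (t : ℕ) :
    cstart n B t % n = cstart n B (t % B) := by
  induction t using Nat.strong_induction_on with
  | _ t ih =>
    by_cases h : t < B
    · rw [Nat.mod_eq_of_lt h, Nat.mod_eq_of_lt (cstart_lt_n hn hB hBn h)]
    · push_neg at h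
      have h1 : t = (t - B) + B := by omega
      rw [h1, cstart_add hB, Nat.add_mod_right, ih (t - B) (by omega),
        Nat.add_mod_right]

/-- value of `cm` at the first vertex of block `t` (taken mod n). -/
lemma cm_cstart {n B K : ℕ} (hn : 0 < n) (hB : 0 < B) (hBn : B ≤ n) (hKB : K ∣ B) (t : ℕ) :
    cm n B K (cstart n B t % n) = czig K (t % K) := by
  rw [cstart_mod hn hB hBn, cm, cbeta_cstart hn hB hBn, Nat.mod_mod_of_dvd _ hKB]

/-- value of `cm` at the last vertex of block `t` (i.e. `cstart (t+1) - 1`, cyclically). -/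
lemma cm_cstart_pred {n B K : ℕ} (hn : 0 < n) (hB : 0 < B) (hBn : B ≤ n) (hKB : K ∣ B)
    (hK : 2 ≤ K) (t : ℕ) :
    cm n B K ((cstart n B (t + 1) + (n - 1)) % n) = czig K (t % K) := by
  have hmod : (cstart n B (t+1) + (n-1)) % n = (cstart n B ((t+1) % B) + (n-1)) % n := by
    conv_lhs => rw [← Nat.mod_add_mod, cstart_mod hn hB hBn]
  rw [hmod]
  have hdd : ∃ d, (t+1) % B = d := ⟨_, rfl⟩
  obtain ⟨d, hd⟩ := hdd
  rw [hd]
  obtain ⟨c, hc⟩ : ∃ c, t + 1 = B * c + d :=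
    ⟨(t+1)/B, by rw [← hd]; exact (Nat.div_add_mod (t+1) B).symm⟩
  obtain ⟨r, hr⟩ := hKB
  have hr1 : 1 ≤ r := by
    rcases Nat.eq_zero_or_pos r with h | h
    · subst h; simp at hr; omega
    · exact h
  have hdB : d < B := by rw [← hd]; exact Nat.mod_lt _ hB
  rcases Nat.eq_zero_or_pos d with hd0 | hd1
  · -- d = 0 : last vertex is n-1, block B-1, residue K-1
    subst hd0
    have hc1 : 1 ≤ c := by
      rcases Nat.eq_zero_or_pos c with h | h
      · subst h; omega
      · exact h
    have h1 : cstart n B 0 = 0 := by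
      rw [cstart, Nat.zero_mul, Nat.zero_add]
      exact Nat.div_eq_of_lt (by omega)
    rw [h1]
    have h2 : (0 + (n-1)) % n = n - 1 := by
      rw [Nat.zero_add]; exact Nat.mod_eq_of_lt (by omega)
    rw [h2, cm, cbeta_last hn hB hBn]
    have hB1 : B - 1 = K * (r - 1) + (K - 1) := by
      have h5 : K * r = K * (r - 1) + K := by
        have h6 : K * (r-1) + K = K * (r - 1 + 1) := by ring
        rw [h6, Nat.sub_add_cancel hr1]
      omega
    have h3 : (B - 1) % K = K - 1 := by
      rw [hB1, Nat.mul_add_mod, Nat.mod_eq_of_lt (by omega)]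
    have h4 : t % K = K - 1 := by
      have hBc : B * c = K * (r * c) := by rw [hr]; ring
      have hrc : 1 ≤ r * c := Nat.one_le_iff_ne_zero.mpr (by positivity)
      have h7 : t = K * (r * c - 1) + (K - 1) := by
        have h5 : K * (r * c) = K * (r * c - 1) + K := by
          have h6 : K * (r*c - 1) + K = K * (r * c - 1 + 1) := by ring
          rw [h6, Nat.sub_add_cancel hrc]
        omega
      rw [h7, Nat.mul_add_mod, Nat.mod_eq_of_lt (by omega)]
    rw [h3, h4]
  · -- d ≥ 1
    have hs1 : cstart n B (d - 1) + 1 ≤ cstart n B d := by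
      have := cstart_succ hB hBn (d - 1)
      rwa [Nat.sub_add_cancel hd1] at this
    have hsn : cstart n B d < n := cstart_lt_n hn hB hBn hdB
    have hs0 : 1 ≤ cstart n B d := by omega
    have h2 : (cstart n B d + (n-1)) % n = cstart n B d - 1 := by
      have h6 : cstart n B d + (n - 1) = (cstart n B d - 1) + n := by omega
      rw [h6, Nat.add_mod_right]; exact Nat.mod_eq_of_lt (by omega)
    rw [h2, cm]
    have hbeta : cbeta n B (cstart n B d - 1) = d - 1 := by
      have hge : d - 1 ≤ cbeta n B (cstart n B d - 1) := by
        rw [← cstart_le_iff hn hB]; omega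
      have hlt : ¬ (d ≤ cbeta n B (cstart n B d - 1)) := by
        rw [← cstart_le_iff hn hB]; omega
      omega
    rw [hbeta]
    have h4 : t % K = (d - 1) % K := by
      have ht' : t = B * c + (d - 1) := by omega
      have h8 : t % K = (t % B) % K := (Nat.mod_mod_of_dvd _ ⟨r, hr⟩).symm
      have htB : t % B = d - 1 := by
        rw [ht', Nat.mul_add_mod]; exact Nat.mod_eq_of_lt (by omega)
      rw [h8, htB]
    rw [h4]

lemma cbeta_add {n B v : ℕ} (hn : 0 < n) : cbeta n B (v + n) = cbeta n B v + B := by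
  unfold cbeta
  rw [show (v + n) * B = v * B + n * B by ring, Nat.add_mul_div_left _ _ hn]

lemma cm_zero {n B K : ℕ} : cm n B K 0 = 0 := by
  simp [cm, cbeta, czig]

lemma cm_last {n B K : ℕ} (hn : 0 < n) (hB : 0 < B) (hBn : B ≤ n) (hK : 2 ≤ K)
    (hKB : K ∣ B) : cm n B K (n - 1) = 1 := by
  obtain ⟨r, hr⟩ := hKB
  have hr1 : 1 ≤ r := by
    rcases Nat.eq_zero_or_pos r with h | h
    · subst h; simp at hr; omega
    · exact h
  rw [cm, cbeta_last hn hB hBn]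
  have hB1 : B - 1 = K * (r - 1) + (K - 1) := by
    have h5 : K * r = K * (r - 1) + K := by
      have h6 : K * (r-1) + K = K * (r - 1 + 1) := by ring
      rw [h6, Nat.sub_add_cancel hr1]
    omega
  rw [hB1, Nat.mul_add_mod, Nat.mod_eq_of_lt (by omega)]
  simp only [czig]
  omega

lemma cm_succ {n B K : ℕ} (hn : 0 < n) (hB : 0 < B) (hBn : B ≤ n) (hK : 2 ≤ K) (v : ℕ) :
    cm n B K (v+1) ≤ cm n B K v + 1 ∧ cm n B K v ≤ cm n B K (v+1) + 1 := by
  have h1 : cbeta n B v ≤ cbeta n B (v+1) := cbeta_mono (Nat.le_succ v)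
  have h2 := cbeta_succ_le hn hBn v
  have hcase : cbeta n B (v+1) = cbeta n B v ∨ cbeta n B (v+1) = cbeta n B v + 1 := by omega
  rcases hcase with h | h
  · rw [cm, cm, h]; omega
  · rw [cm, cm, h]
    have hj : cbeta n B v % K < K := Nat.mod_lt _ (by omega)
    obtain ⟨q, hq⟩ : ∃ q, cbeta n B v = K * q + cbeta n B v % K :=
      ⟨cbeta n B v / K, (Nat.div_add_mod _ K).symm⟩
    rcases Nat.lt_or_ge (cbeta n B v % K + 1) K with hlt | hge
    · have : (cbeta n B v + 1) % K = cbeta n B v % K + 1 := by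
        conv_lhs => rw [hq]
        rw [show K * q + cbeta n B v % K + 1 = K * q + (cbeta n B v % K + 1) by ring,
          Nat.mul_add_mod, Nat.mod_eq_of_lt hlt]
      rw [this]
      simp only [czig]
      omega
    · have hKe : cbeta n B v % K + 1 = K := by omega
      have : (cbeta n B v + 1) % K = 0 := by
        conv_lhs => rw [hq]
        rw [show K * q + cbeta n B v % K + 1 = K * (q + 1) by rw [Nat.mul_add]; omega]
        exact Nat.mul_mod_right K (q+1)
      rw [this]
      simp only [czig]
      omega

lemma comp_subset' {α : Type*} (G : SimpleGraph α) (S : Set α) (T : Set α)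
    (hcl : ∀ u w : α, u ∈ T → w ∈ S → G.Adj u w → w ∈ T) (v : ↥S) (hv : (v : α) ∈ T) :
    ∀ u ∈ ((G.induce S).connectedComponentMk v).supp, (u : α) ∈ T := by
  have key : ∀ (x y : ↥S) (w : (G.induce S).Walk x y), (x:α) ∈ T → (y:α) ∈ T := by
    intro x y w
    induction w with
    | nil => exact id
    | @cons a b c h p ih =>
      intro hx
      exact ih (hcl a b hx b.2 ((SimpleGraph.comap_adj).mp h))
  intro u hu
  rw [SimpleGraph.ConnectedComponent.mem_supp_iff, SimpleGraph.ConnectedComponent.eq] at hu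
  obtain ⟨w⟩ := hu.symm
  exact key v u w hv

lemma supp_card_le {n : ℕ} (G : SimpleGraph (Fin n)) (S : Set (Fin n)) (v : ↥S) :
    ((G.induce S).connectedComponentMk v).supp.ncard ≤ n := by
  calc ((G.induce S).connectedComponentMk v).supp.ncard
      ≤ (Set.univ : Set ↥S).ncard := Set.ncard_le_ncard (Set.subset_univ _) Set.finite_univ
    _ = Nat.card ↥S := Set.ncard_univ _
    _ ≤ Nat.card (Fin n) := Nat.card_le_card_of_injective _ Subtype.val_injective
    _ = n := by simp

lemma interval_ncard {n s ℓ : ℕ} (hn : 0 < n) (hs : s < n) :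
    {u : Fin n | ((u:ℕ) + n - s) % n < ℓ}.ncard ≤ ℓ := by
  classical
  have h := Set.ncard_le_ncard_of_injOn (fun u : Fin n => ((u:ℕ) + n - s) % n)
    (s := {u : Fin n | ((u:ℕ) + n - s) % n < ℓ}) (t := Set.Iio ℓ)
    (fun a ha => ha) ?_ (Set.finite_Iio ℓ)
  · calc _ ≤ (Set.Iio ℓ).ncard := h
      _ = ℓ := by
          rw [show (Set.Iio ℓ) = ↑(Finset.range ℓ) by ext; simp, Set.ncard_coe_finset]
          simp
  · intro a _ b _ hab
    simp only at hab
    have h2 : (a:ℕ) + n - s = (a:ℕ) + (n - s) := by omega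
    have h3 : (b:ℕ) + n - s = (b:ℕ) + (n - s) := by omega
    rw [h2, h3] at hab
    have h4 : (a:ℕ) ≡ (b:ℕ) [MOD n] := Nat.ModEq.add_right_cancel' (n - s) hab
    have h5 : (a:ℕ) % n = (b:ℕ) % n := h4
    rw [Nat.mod_eq_of_lt a.2, Nat.mod_eq_of_lt b.2] at h5
    exact Fin.ext h5

lemma cycle_adj_iff {m : ℕ} (u w : Fin (m + 3)) :
    (cycleGraph (m + 3)).Adj u w ↔
      ((w:ℕ) = ((u:ℕ) + 1) % (m + 3) ∨ (u:ℕ) = ((w:ℕ) + 1) % (m + 3)) := by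
  rw [cycleGraph_adj (n := m + 1)]
  have h1 : ∀ a b : Fin (m+3), a - b = 1 ↔ (a:ℕ) = ((b:ℕ) + 1) % (m+3) := by
    intro a b
    rw [sub_eq_iff_eq_add]
    constructor
    · intro h
      rw [h, Fin.add_def]
      simp [Fin.val_one]
      ring_nf
    · intro h
      apply Fin.ext
      rw [Fin.add_def]
      simp [Fin.val_one]
      rw [add_comm 1 (b:ℕ)]
      omega
  rw [h1, h1]
  tauto
def cOrd (n B K k : ℕ) (v : Fin n) (i : Fin k) : Fin (k+1) :=
  if (i:ℕ) < cm n B K (v:ℕ) then ⟨i, Nat.lt_succ_of_lt i.2⟩ else ⟨(i:ℕ)+1, Nat.succ_lt_succ i.2⟩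

lemma cOrd_consistent {n' B K k : ℕ}
    (hstep : ∀ u w : Fin n', (cycleGraph n').Adj u w → cm n' B K u ≤ cm n' B K w + 1) :
    IsConsistentPQColoring (cycleGraph n') (k+1) k (cOrd n' B K k) := by
  constructor
  · intro v i j h
    simp only [cOrd] at h
    rw [Fin.ext_iff] at h ⊢
    split_ifs at h <;> simp only [Fin.mk.injEq] at h <;> omega
  · intro x y hxy i j hij hc
    have h1 := hstep x y hxy
    have h2 := hstep y x hxy.symm
    simp only [cOrd] at hc
    rw [Fin.ext_iff] at hc
    have hij' : (i:ℕ) ≠ (j:ℕ) := fun h => hij (Fin.ext h)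
    split_ifs at hc <;> simp only [Fin.mk.injEq] at hc <;> omega

lemma mem_cOrd_colors {n B K k : ℕ} (v : Fin n) (hmk : cm n B K (v:ℕ) ≤ k) (i : Fin (k+1)) :
    i ∈ ordColors (cOrd n B K k) v ↔ (i:ℕ) ≠ cm n B K (v:ℕ) := by
  unfold ordColors
  rw [Finset.mem_image]
  constructor
  · rintro ⟨a, -, ha⟩ heq
    have ha' : ((cOrd n B K k v a : Fin (k+1)) : ℕ) = (i:ℕ) := by rw [ha]
    have h2 := a.2
    simp only [cOrd] at ha'
    split_ifs at ha' <;> simp only at ha' <;> omega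
  · intro hne
    have hik := i.2
    by_cases hlt : (i:ℕ) < cm n B K (v:ℕ)
    · refine ⟨⟨(i:ℕ), by omega⟩, Finset.mem_univ _, Fin.ext ?_⟩
      simp only [cOrd]
      split_ifs with h
      · rfl

    · have hgt : cm n B K (v:ℕ) < (i:ℕ) := by omega
      refine ⟨⟨(i:ℕ) - 1, by omega⟩, Finset.mem_univ _, Fin.ext ?_⟩
      simp only [cOrd]
      split_ifs with h
      · simp only [Fin.val_mk] at h ⊢; omega
      · simp only [Fin.val_mk] at h ⊢; omega
-- AUX END
lemma three_k_lt (k : ℕ) : 3 * k < k * k + 3 := by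
  rcases Nat.lt_or_ge k 3 with h | h
  · interval_cases k <;> omega
  · have := Nat.mul_le_mul_right k h
    omega

theorem stmt13 (n k : ℕ) (hn : 3 ≤ n) (hk : 1 ≤ k) :
    HasConsistentClusteredColoring (SimpleGraph.cycleGraph n) (k + 1) k
      (k ^ 2 + 3 * k - 1) := by
  obtain ⟨m', rfl⟩ : ∃ m', n = m' + 3 := ⟨n - 3, by omega⟩
  have hk2 : k ^ 2 = k * k := sq k
  have h33 : 3 * k < k * k + 3 := three_k_lt k
  by_cases hsmall : m' + 3 ≤ k ^ 2 + 3 * k - 1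
  · -- small case : constant colouring (B = 0 gives cm ≡ 0)
    refine ⟨cOrd (m'+3) 0 2 k, cOrd_consistent ?_, ?_⟩
    · intro u w _
      have h1 : cm (m'+3) 0 2 (u:ℕ) = 0 := by simp [cm, cbeta, czig]
      have h2 : cm (m'+3) 0 2 (w:ℕ) = 0 := by simp [cm, cbeta, czig]
      omega
    · intro i v
      calc _ ≤ m' + 3 := supp_card_le _ _ v
        _ ≤ k ^ 2 + 3 * k - 1 := hsmall
  · -- big case
    push_neg at hsmall
    have hbig : k * k + 3 * k ≤ m' + 3 := by omega
    have hkk : k ≤ k * k := Nat.le_mul_of_pos_left k hk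
    set NN := m' + 3 with hNN
    have hadj_iff : ∀ u w : Fin NN, (cycleGraph NN).Adj u w ↔
        ((w:ℕ) = ((u:ℕ)+1) % NN ∨ (u:ℕ) = ((w:ℕ)+1) % NN) := fun u w => cycle_adj_iff u w
    clear_value NN
    have hn0 : 0 < NN := by omega
    obtain ⟨K, hKdef⟩ : ∃ K, K = 2 * k := ⟨_, rfl⟩
    have hK2 : 2 ≤ K := by omega
    obtain ⟨r, hrdef⟩ : ∃ r, r = (NN + (6 * k - 1)) / (6 * k) := ⟨_, rfl⟩
    obtain ⟨B, hBdef⟩ : ∃ B, B = K * r := ⟨_, rfl⟩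
    have hKB : K ∣ B := ⟨r, hBdef⟩
    have hdm := Nat.div_add_mod (NN + (6 * k - 1)) (6 * k)
    have hml : (NN + (6 * k - 1)) % (6 * k) < 6 * k := Nat.mod_lt _ (by omega)
    have h6kr : 6 * k * r ≤ NN + 6 * k - 1 ∧ NN ≤ 6 * k * r := by
      rw [hrdef]; omega
    have h3B : NN ≤ 3 * B := by
      have h1 : 3 * B = 6 * k * r := by rw [hBdef, hKdef]; ring
      omega
    have hBn : B ≤ NN := by
      have h1 : 3 * B = 6 * k * r := by rw [hBdef, hKdef]; ring
      omega
    have hB0 : 0 < B := by omega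
    -- step bound on cm along edges
    have hstep : ∀ u w : Fin NN, (cycleGraph NN).Adj u w →
        cm NN B K (u:ℕ) ≤ cm NN B K (w:ℕ) + 1 := by
      intro u w hadj
      rcases (hadj_iff u w).mp hadj with h | h
      · by_cases hlt : (u:ℕ) + 1 < NN
        · have hw : (w:ℕ) = (u:ℕ) + 1 := by rw [h, Nat.mod_eq_of_lt hlt]
          rw [hw]
          exact (cm_succ hn0 hB0 hBn hK2 (u:ℕ)).2
        · have hu : (u:ℕ) = NN - 1 := by have := u.2; omega
          have hw : (w:ℕ) = 0 := by rw [h, hu, show NN - 1 + 1 = NN by omega, Nat.mod_self]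
          rw [hu, hw, cm_zero, cm_last hn0 hB0 hBn hK2 hKB]
      · by_cases hlt : (w:ℕ) + 1 < NN
        · have hu : (u:ℕ) = (w:ℕ) + 1 := by rw [h, Nat.mod_eq_of_lt hlt]
          rw [hu]
          exact (cm_succ hn0 hB0 hBn hK2 (w:ℕ)).1
        · have hw : (w:ℕ) = NN - 1 := by have := w.2; omega
          have hu : (u:ℕ) = 0 := by rw [h, hw, show NN - 1 + 1 = NN by omega, Nat.mod_self]
          rw [hu, hw, cm_zero]
          omega
    have hmle : ∀ v : Fin NN, cm NN B K (v:ℕ) ≤ k := by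
      intro v
      have hj : cbeta NN B (v:ℕ) % K < K := Nat.mod_lt _ (by omega)
      simp only [cm, czig]
      omega
    refine ⟨cOrd NN B K k, cOrd_consistent hstep, ?_⟩
    intro i
    set S : Set (Fin NN) := {x | i ∈ ordColors (cOrd NN B K k) x} with hSdef
    intro v
    have hS : ∀ x : Fin NN, x ∈ S ↔ (i:ℕ) ≠ cm NN B K (x:ℕ) := by
      intro x
      rw [hSdef]
      simp only [Set.mem_setOf_eq]
      exact mem_cOrd_colors x (hmle x) i
    have hik : (i:ℕ) ≤ k := by have := i.2; omega
    have hvS : (i:ℕ) ≠ cm NN B K ((v : Fin NN):ℕ) := (hS _).mp v.2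
    obtain ⟨b, hbdef⟩ : ∃ b, cbeta NN B ((v : Fin NN):ℕ) = b := ⟨_, rfl⟩
    have hbB : b < B := hbdef ▸ cbeta_lt hn0 hB0 (v : Fin NN).2
    obtain ⟨j, hjdef⟩ : ∃ j, j = b % K := ⟨_, rfl⟩
    obtain ⟨p, hpdef⟩ : ∃ p, p = b / K := ⟨_, rfl⟩
    have hbpj : K * p + j = b := by rw [hjdef, hpdef]; exact Nat.div_add_mod b K
    have hjK : j < K := by rw [hjdef]; exact Nat.mod_lt _ (by omega)
    have hvS' : (i:ℕ) ≠ czig K j := by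
      rw [hjdef, ← hbdef]
      exact hvS
    obtain ⟨P, N, hP1, hP2, hP3, hPz, hNz⟩ :
        ∃ P N : ℕ, P < b + B ∧ b + B < N ∧ N ≤ P + K ∧
          czig K (P % K) = (i:ℕ) ∧ czig K (N % K) = (i:ℕ) := by
      have hr1 : 1 ≤ r := by
        rcases Nat.eq_zero_or_pos r with h | h
        · rw [h, Nat.mul_zero] at hBdef; omega
        · exact h
      have hBKp : B + K * p = K * (r + p) := by rw [hBdef]; ring
      have hrp1 : 1 ≤ r + p := by omega
      have h7 : r + p = (r + p - 1) + 1 := by omega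
      have hmulsucc : K * (r + p) = K * (r + p - 1) + K := by
        conv_lhs => rw [h7]
        rw [Nat.mul_succ]
      have hmul2 : K * (r + p + 1) = K * (r + p) + K := by
        rw [Nat.mul_succ]
      simp only [czig] at hvS'
      rcases Nat.lt_or_ge j (i:ℕ) with h1 | h1
      · have hii1 : 1 ≤ (i:ℕ) := by omega
        refine ⟨B + K*p - (i:ℕ), B + K*p + (i:ℕ), by omega, by omega, by omega, ?_, ?_⟩
        · have hP' : B + K*p - (i:ℕ) = K*(r+p-1) + (K - (i:ℕ)) := by omega
          rw [hP', Nat.mul_add_mod, Nat.mod_eq_of_lt (by omega)]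
          simp only [czig]; omega
        · have hN' : B + K*p + (i:ℕ) = K*(r+p) + (i:ℕ) := by omega
          rw [hN', Nat.mul_add_mod, Nat.mod_eq_of_lt (by omega)]
          simp only [czig]; omega
      · rcases Nat.lt_or_ge j (K - (i:ℕ)) with h2 | h2
        · have hij : (i:ℕ) < j := by omega
          refine ⟨B + K*p + (i:ℕ), B + K*p + (K - (i:ℕ)), by omega, by omega, by omega, ?_, ?_⟩
          · have hP' : B + K*p + (i:ℕ) = K*(r+p) + (i:ℕ) := by omega
            rw [hP', Nat.mul_add_mod, Nat.mod_eq_of_lt (by omega)]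
            simp only [czig]; omega
          · rcases Nat.eq_zero_or_pos (i:ℕ) with hz | hz
            · have hN' : B + K*p + (K - (i:ℕ)) = K*(r+p+1) := by omega
              rw [hN', Nat.mul_mod_right]
              simp only [czig]; omega
            · have hN' : B + K*p + (K - (i:ℕ)) = K*(r+p) + (K - (i:ℕ)) := by omega
              rw [hN', Nat.mul_add_mod, Nat.mod_eq_of_lt (by omega)]
              simp only [czig]; omega
        · have hii1 : 1 ≤ (i:ℕ) := by omega
          have hij : K - (i:ℕ) < j := by omega
          refine ⟨B + K*p + (K - (i:ℕ)), B + K*p + (K + (i:ℕ)), by omega, by omega, by omega, ?_, ?_⟩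
          · have hP' : B + K*p + (K - (i:ℕ)) = K*(r+p) + (K - (i:ℕ)) := by omega
            rw [hP', Nat.mul_add_mod, Nat.mod_eq_of_lt (by omega)]
            simp only [czig]; omega
          · have hN' : B + K*p + (K + (i:ℕ)) = K*(r+p+1) + (i:ℕ) := by omega
            rw [hN', Nat.mul_add_mod, Nat.mod_eq_of_lt (by omega)]
            simp only [czig]; omega
    obtain ⟨s', hs'def⟩ : ∃ s', s' = cstart NN B (P+1) := ⟨_, rfl⟩
    obtain ⟨e', he'def⟩ : ∃ e', e' = cstart NN B N := ⟨_, rfl⟩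
    obtain ⟨l, hldef⟩ : ∃ l, l = e' - s' := ⟨_, rfl⟩
    have hse : s' ≤ e' := by rw [hs'def, he'def]; exact cstart_mono (by omega)
    have hl3 : l ≤ 6 * k - 3 := by
      have h1 := cstart_bound (n := NN) hB0 h3B (P+1) (N - (P+1))
      rw [show (P+1) + (N - (P+1)) = N by omega] at h1
      rw [← he'def, ← hs'def] at h1
      omega
    have hlNN : l < NN := by omega
    obtain ⟨s, hsdef⟩ : ∃ s, s = s' % NN := ⟨_, rfl⟩
    have hsNN : s < NN := by rw [hsdef]; exact Nat.mod_lt _ hn0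
    set T : Set (Fin NN) := {u : Fin NN | ((u:ℕ) + NN - s) % NN < l} with hTdef
    have memT : ∀ x : ℕ, s' ≤ x → x < e' → (x % NN + NN - s) % NN < l := by
      intro x hx1 hx2
      have hq1 : s'/NN ≤ x/NN := Nat.div_le_div_right hx1
      have hq2 : x/NN ≤ s'/NN + 1 := by
        have h5 : x ≤ s' + NN := by omega
        calc x/NN ≤ (s' + NN)/NN := Nat.div_le_div_right h5
          _ = s'/NN + 1 := Nat.add_div_right _ hn0
      have hxq := Nat.div_add_mod x NN
      have hsq := Nat.div_add_mod s' NN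
      have hxm : x % NN < NN := Nat.mod_lt _ hn0
      rcases (by omega : x/NN = s'/NN ∨ x/NN = s'/NN + 1) with he | he
      · obtain ⟨Z, hZ1, hZ2⟩ : ∃ Z, Z + x % NN = x ∧ Z + s = s' :=
          ⟨NN*(s'/NN), by rw [← he]; omega, by rw [hsdef]; omega⟩
        have h6 : x % NN + NN - s = (x - s') + NN := by omega
        rw [h6, Nat.add_mod_right, Nat.mod_eq_of_lt (by omega)]
        omega
      · obtain ⟨Z, hZ1, hZ2⟩ : ∃ Z, Z + NN + x % NN = x ∧ Z + s = s' :=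
          ⟨NN*(s'/NN), by
            have h7 : NN*(x/NN) = NN*(s'/NN) + NN := by rw [he, Nat.mul_add, Nat.mul_one]
            omega, by rw [hsdef]; omega⟩
        have h6 : x % NN + NN - s = x - s' := by omega
        rw [h6, Nat.mod_eq_of_lt (by omega)]
        omega
    have hvT : (v : Fin NN) ∈ T := by
      have hx1 : s' ≤ ((v : Fin NN):ℕ) + NN := by
        rw [hs'def, cstart_le_iff hn0 hB0, cbeta_add hn0, hbdef]
        omega
      have hx2 : ((v : Fin NN):ℕ) + NN < e' := by
        by_contra hcon
        push_neg at hcon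
        rw [he'def, cstart_le_iff hn0 hB0, cbeta_add hn0, hbdef] at hcon
        omega
      have h8 := memT _ hx1 hx2
      have hmod : (((v : Fin NN):ℕ) + NN) % NN = ((v : Fin NN):ℕ) := by
        rw [Nat.add_mod_right]
        exact Nat.mod_eq_of_lt (v : Fin NN).2
      show (((v : Fin NN):ℕ) + NN - s) % NN < l
      rw [← hmod]
      exact h8
    have hcl : ∀ u w : Fin NN, u ∈ T → w ∈ S → (cycleGraph NN).Adj u w → w ∈ T := by
      intro u w hu hw hadj
      have hq : ((u:ℕ) + NN - s) % NN < l := hu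
      obtain ⟨q, hqdef⟩ : ∃ q, ((u:ℕ) + NN - s) % NN = q := ⟨_, rfl⟩
      obtain ⟨x, hxdef⟩ : ∃ x, x = s' + q := ⟨_, rfl⟩
      have hqx : x % NN = (u:ℕ) := by
        rw [hxdef]
        calc (s' + q) % NN = (s' % NN + q) % NN := (Nat.mod_add_mod s' NN q).symm
          _ = (s + q) % NN := by rw [hsdef]
          _ = (s + ((u:ℕ) + NN - s) % NN) % NN := by rw [hqdef]
          _ = (s + ((u:ℕ) + NN - s)) % NN := Nat.add_mod_mod _ _ _
          _ = ((u:ℕ) + NN) % NN := by rw [show s + ((u:ℕ) + NN - s) = (u:ℕ) + NN by omega]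
          _ = (u:ℕ) := by rw [Nat.add_mod_right]; exact Nat.mod_eq_of_lt u.2
      have hx1 : s' ≤ x := by omega
      have hx2 : x < e' := by omega
      rcases (hadj_iff u w).mp hadj with hc | hc
      · have hw' : (w:ℕ) = (x + 1) % NN := by
          rw [hc, ← hqx, Nat.mod_add_mod]
        by_cases hend : x + 1 < e'
        · have h8 := memT (x+1) (by omega) hend
          show ((w:ℕ) + NN - s) % NN < l
          rw [hw']
          exact h8
        · exfalso
          have hxe : x + 1 = e' := by omega
          have h9 : cm NN B K (w:ℕ) = czig K (N % K) := by
            rw [hw', hxe, he'def]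
            exact cm_cstart hn0 hB0 hBn hKB N
          exact (hS w).mp hw (h9.trans hNz).symm
      · have hw' : (w:ℕ) = (x + (NN - 1)) % NN := by
          have c3 : (((w:ℕ)+1) % NN + (NN-1)) % NN = (((w:ℕ)+1) + (NN-1)) % NN :=
            Nat.mod_add_mod _ _ _
          have c4 : ((w:ℕ)+1) + (NN-1) = (w:ℕ) + NN := by omega
          have c5 : ((w:ℕ) + NN) % NN = (w:ℕ) := by
            rw [Nat.add_mod_right]; exact Nat.mod_eq_of_lt w.2
          calc (w:ℕ) = ((w:ℕ) + NN) % NN := c5.symm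
            _ = (((w:ℕ)+1) + (NN-1)) % NN := by rw [c4]
            _ = (((w:ℕ)+1) % NN + (NN-1)) % NN := c3.symm
            _ = ((u:ℕ) + (NN-1)) % NN := by rw [← hc]
            _ = (x % NN + (NN-1)) % NN := by rw [hqx]
            _ = (x + (NN-1)) % NN := Nat.mod_add_mod _ _ _
        by_cases hst : s' < x
        · have h8 := memT (x-1) (by omega) (by omega)
          have h10 : (x-1) % NN = (x + (NN-1)) % NN := by
            rw [show x + (NN-1) = (x-1) + NN by omega, Nat.add_mod_right]
          show ((w:ℕ) + NN - s) % NN < l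
          rw [hw', ← h10]
          exact h8
        · exfalso
          have hxs : x = s' := by omega
          have h9 : cm NN B K (w:ℕ) = czig K (P % K) := by
            rw [hw', hxs, hs'def]
            exact cm_cstart_pred hn0 hB0 hBn hKB hK2 P
          exact (hS w).mp hw (h9.trans hPz).symm
    have hsub := comp_subset' (cycleGraph NN) S T hcl v hvT
    have hcard1 : (((cycleGraph NN).induce S).connectedComponentMk v).supp.ncard ≤ T.ncard :=
      Set.ncard_le_ncard_of_injOn Subtype.val (fun a ha => hsub a ha)
        Subtype.val_injective.injOn (Set.toFinite T)
    have hcard2 : T.ncard ≤ l := by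
      rw [hTdef]
      exact interval_ncard hn0 hsNN
    calc (((cycleGraph NN).induce S).connectedComponentMk v).supp.ncard
        ≤ T.ncard := hcard1
      _ ≤ l := hcard2
      _ ≤ k ^ 2 + 3 * k - 1 := by omega
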